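/- If u : ℝ → ℓ²(ℤ) is a C¹ solution of the DNLS equation i u'(t) = Δu(t) + ν|u(t)|²u(t) with ν ∈ {−1,1}, then the ℓ² norm is conserved: ‖u(t)‖_{ℓ²} = ‖u(0)‖_{ℓ²} for all t. -/

import Mathlib

noncomputable section

/-- The Hilbert space `ℓ²(ℤ)`. -/
abbrev H : Type := lp (fun _ : ℤ => ℂ) 2

open Complex

private lemma shift_summable (a : ℤ → ℂ) (h2 : Summable fun g => ‖a g‖ ^ 2) (k : ℤ) :
    Summable fun g => (starRingEnd ℂ) (a (g + k)) * a g := by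
  apply Summable.of_norm
  have hshift : Summable fun g => ‖a (g + k)‖ ^ 2 :=
    ((Equiv.addRight k).summable_iff (f := fun g => ‖a g‖ ^ 2)).2 h2
  refine Summable.of_nonneg_of_le (fun g => norm_nonneg _) (fun g => ?_)
    ((hshift.add h2).div_const 2)
  rw [norm_mul, RCLike.norm_conj]
  nlinarith [sq_nonneg (‖a (g + k)‖ - ‖a g‖), norm_nonneg (a (g + k)), norm_nonneg (a g)]

private lemma key (ν : ℝ) (a a' : ℤ → ℂ)
    (h2 : Summable fun g => ‖a g‖ ^ 2)
    (heq : ∀ g : ℤ, Complex.I * a' g =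
      (a (g + 1) - 2 * a g + a (g - 1)) + ν * (‖a g‖ : ℂ) ^ 2 * a g) :
    Complex.re (∑' g, (starRingEnd ℂ) (a' g) * a g) = 0 := by
  set B : ℤ → ℂ := fun g => (a (g + 1) - 2 * a g + a (g - 1)) + ν * (‖a g‖ : ℂ) ^ 2 * a g with hB
  have ha' : ∀ g, a' g = -Complex.I * B g := by
    intro g
    have h := heq g
    calc a' g = (-Complex.I) * (Complex.I * a' g) := by
          rw [← mul_assoc]; simp [Complex.I_mul_I]
      _ = -Complex.I * B g := by rw [h]
  set f1 : ℤ → ℂ := fun g => (starRingEnd ℂ) (a (g + 1)) * a g with hf1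
  set f3 : ℤ → ℂ := fun g => (starRingEnd ℂ) (a (g - 1)) * a g with hf3
  set r : ℤ → ℝ := fun g => -2 * ‖a g‖ ^ 2 + ν * ‖a g‖ ^ 4 with hr
  have hpt : ∀ g, (starRingEnd ℂ) (B g) * a g = f1 g + f3 g + (r g : ℂ) := by
    intro g
    have hc : (starRingEnd ℂ) (a g) * a g = (‖a g‖ : ℂ) ^ 2 := RCLike.conj_mul (a g)
    simp only [hB, hf1, hf3, hr, map_add, map_sub, map_mul, map_ofNat, map_pow,
      Complex.conj_ofReal]
    push_cast
    linear_combination ((ν : ℂ) * (‖a g‖ : ℂ) ^ 2 - 2) * hc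
  have s1 : Summable f1 := shift_summable a h2 1
  have s3 : Summable f3 := by
    have := shift_summable a h2 (-1)
    simpa [hf3, sub_eq_add_neg] using this
  have h4 : Summable fun g => ‖a g‖ ^ 4 := by
    refine Summable.of_norm_bounded_eventually h2 ?_
    have h0 : Filter.Tendsto (fun g => ‖a g‖ ^ 2) Filter.cofinite (nhds 0) :=
      h2.tendsto_cofinite_zero
    filter_upwards [h0.eventually (gt_mem_nhds one_pos)] with g hg
    have hn : (0 : ℝ) ≤ ‖a g‖ := norm_nonneg _
    rw [Real.norm_eq_abs, _root_.abs_of_nonneg (by positivity)]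
    nlinarith [sq_nonneg (‖a g‖)]
  have sr : Summable fun g => (r g : ℂ) := by
    rw [Complex.summable_ofReal]
    exact (h2.mul_left (-2)).add (h4.mul_left ν)
  have hsum : (∑' g, (starRingEnd ℂ) (a' g) * a g)
      = Complex.I * ((∑' g, f1 g) + ((∑' g, f3 g) + (∑' g, (r g : ℂ)))) := by
    rw [← Summable.tsum_add s3 sr, ← Summable.tsum_add s1 (s3.add sr), ← tsum_mul_left]
    refine tsum_congr fun g => ?_
    rw [ha' g, map_mul]
    have hcI : (starRingEnd ℂ) (-Complex.I) = Complex.I := by simp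
    rw [hcI, mul_assoc, hpt g]
    ring
  rw [hsum]
  have hT3 : (∑' g, f3 g) = (starRingEnd ℂ) (∑' g, f1 g) := by
    have hstar : (starRingEnd ℂ) (∑' g, f1 g) = ∑' g, a (g + 1) * (starRingEnd ℂ) (a g) := by
      rw [show ((starRingEnd ℂ) (∑' g, f1 g)) = star (∑' g, f1 g) from rfl, tsum_star]
      refine tsum_congr fun g => ?_
      simp [hf1, mul_comm]
    rw [hstar]
    calc (∑' g, f3 g) = ∑' g, a ((g - 1) + 1) * (starRingEnd ℂ) (a (g - 1)) := by
          refine tsum_congr fun g => ?_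
          simp [hf3, mul_comm, sub_add_cancel]
      _ = ∑' g, a (g + 1) * (starRingEnd ℂ) (a g) :=
          (Equiv.subRight (1 : ℤ)).tsum_eq (fun g => a (g + 1) * (starRingEnd ℂ) (a g))
  have him : ∀ z : ℂ, Complex.re (Complex.I * z) = -Complex.im z := by
    intro z; simp
  rw [him, hT3, ← Complex.ofReal_tsum]
  simp

theorem DNLS_l2_conservation (ν : ℝ) (hν : ν = 1 ∨ ν = -1)
    (u u' : ℝ → H) (hu' : Continuous u') (hderiv : ∀ t, HasDerivAt u (u' t) t)
    (heq : ∀ (t : ℝ) (g : ℤ),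
      Complex.I * (u' t : ℤ → ℂ) g =
        ((u t : ℤ → ℂ) (g + 1) - 2 * (u t : ℤ → ℂ) g + (u t : ℤ → ℂ) (g - 1)) +
          ν * (‖(u t : ℤ → ℂ) g‖ : ℂ) ^ 2 * (u t : ℤ → ℂ) g) :
    ∀ t : ℝ, ‖u t‖ = ‖u 0‖ := by
  have hkey : ∀ t, Complex.re (inner ℂ (u' t) (u t) : ℂ) = 0 := by
    intro t
    have h2 : Summable fun g => ‖(u t : ℤ → ℂ) g‖ ^ 2 := by
      have h := (lp.memℓp (u t)).summable (by norm_num : (0:ℝ) < (2 : ENNReal).toReal)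
      have h2' : ((2 : ENNReal).toReal) = ((2 : ℕ) : ℝ) := by norm_num
      simpa [h2', Real.rpow_natCast] using h
    have hk := key ν (u t) (u' t) h2 (heq t)
    rw [lp.inner_eq_tsum]
    simpa [RCLike.inner_apply, mul_comm] using hk
  have hN : ∀ t, HasDerivAt (fun s => ‖u s‖ ^ 2) 0 t := by
    intro t
    have h1 : HasDerivAt (fun s => (inner ℂ (u s) (u s) : ℂ))
        ((inner ℂ (u t) (u' t) : ℂ) + inner ℂ (u' t) (u t)) t :=
      (hderiv t).inner ℂ (hderiv t)
    have h2 := Complex.reCLM.hasFDerivAt.comp_hasDerivAt t h1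
    have hval : Complex.re ((inner ℂ (u t) (u' t) : ℂ) + inner ℂ (u' t) (u t)) = 0 := by
      rw [Complex.add_re]
      rw [show (inner ℂ (u t) (u' t) : ℂ) = (starRingEnd ℂ) (inner ℂ (u' t) (u t)) from
        (inner_conj_symm (u t) (u' t)).symm]
      rw [Complex.conj_re, hkey t]
      ring
    have heqf : (fun s => Complex.reCLM ((inner ℂ (u s) (u s) : ℂ))) = fun s => ‖u s‖ ^ 2 := by
      funext s
      exact inner_self_eq_norm_sq (𝕜 := ℂ) (u s)
    rw [← heqf]
    simpa [Function.comp_def, hval, Complex.reCLM_apply] using h2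
  intro t
  have hconst : ‖u t‖ ^ 2 = ‖u 0‖ ^ 2 :=
    is_const_of_deriv_eq_zero (fun s => (hN s).differentiableAt) (fun s => (hN s).deriv) t 0
  exact (sq_eq_sq₀ (norm_nonneg _) (norm_nonneg _)).1 hconst
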